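/- Let $G$ be a connected graph on $n \geq 3$ vertices and suppose $Z_-(G) = 0$. Then $G$ has a unique perfect matching, $n$ is even, and $G$ contains at least one leaf. -/

import Mathlib

open SimpleGraph

variable {V : Type*}

/-- A skew fort: a nonempty vertex set `F` such that no vertex of the graph
has exactly one neighbor in `F`. -/
def SkewFort (G : SimpleGraph V) (F : Set V) : Prop :=
  F.Nonempty ∧ ∀ v : V, (G.neighborSet v ∩ F).ncard ≠ 1

/-- The vertices eventually forced blue by the skew color change rule starting
from the set `S` of initially blue vertices: a vertex `v` is forced if some
vertex `u` has `v` as its unique non-blue neighbor. -/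
inductive SkewForced (G : SimpleGraph V) (S : Set V) : V → Prop
  | mem : ∀ {v}, v ∈ S → SkewForced G S v
  | force : ∀ {u v}, G.Adj u v → (∀ w, G.Adj u w → w ≠ v → SkewForced G S w) →
      SkewForced G S v

/-- The skew closure of `S`: the final set of blue vertices. -/
def skewClosure (G : SimpleGraph V) (S : Set V) : Set V := {v | SkewForced G S v}

/-- `S` is a skew forcing set if its skew closure is everything. -/
def IsSkewForcingSet (G : SimpleGraph V) (S : Set V) : Prop :=
  skewClosure G S = Set.univ

/-- The skew forcing number: minimum cardinality of a skew forcing set. -/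
noncomputable def skewForcingNumber (G : SimpleGraph V) : ℕ :=
  sInf {n | ∃ S : Set V, S.ncard = n ∧ IsSkewForcingSet G S}

/-- The staged skew forcing process starting from the empty set. -/
def Bset (G : SimpleGraph V) : ℕ → Set V
  | 0 => ∅
  | k + 1 => Bset G k ∪ {v | ∃ u, G.Adj u v ∧ ∀ w, G.Adj u w → w ≠ v → w ∈ Bset G k}

lemma Bset_mono (G : SimpleGraph V) : ∀ {k l : ℕ}, k ≤ l → Bset G k ⊆ Bset G l := by
  intro k l h
  induction l with
  | zero => simp_all
  | succ n ih =>
    rcases Nat.lt_or_ge k (n + 1) with h' | h'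
    · exact (ih (Nat.lt_succ_iff.mp h')).trans Set.subset_union_left
    · have : k = n + 1 := le_antisymm h h'
      subst this; rfl

lemma forced_mem_Bset [Fintype V] {G : SimpleGraph V} {v : V}
    (h : SkewForced G ∅ v) : ∃ k, v ∈ Bset G k := by
  classical
  induction h with
  | mem h => exact absurd h (Set.notMem_empty _)
  | @force u v hadj hw ih =>
    choose f hf using ih
    refine ⟨(Finset.univ.sup fun w : V =>
      if h1 : G.Adj u w then if h2 : w ≠ v then f w h1 h2 else 0 else 0) + 1, ?_⟩
    refine Set.mem_union_right _ ⟨u, hadj, fun w hw1 hw2 => ?_⟩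
    refine Bset_mono G ?_ (hf w hw1 hw2)
    have := Finset.le_sup (f := fun w : V =>
      if h1 : G.Adj u w then if h2 : w ≠ v then f w h1 h2 else 0 else 0)
      (Finset.mem_univ w)
    simpa [dif_pos hw1, dif_pos hw2] using this

/-- A connected graph on at least three vertices with skew forcing number zero
has a unique perfect matching, an even number of vertices, and a leaf. -/
theorem connected_skewForcingNumber_zero [Fintype V] (G : SimpleGraph V)
    (hconn : G.Connected) (hn : 3 ≤ Fintype.card V)
    (hz : skewForcingNumber G = 0) :
    (∃! M : G.Subgraph, M.IsPerfectMatching) ∧ Even (Fintype.card V) ∧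
      ∃ u w : V, G.neighborSet u = {w} := by
  classical
  -- extract that ∅ is a skew forcing set
  have hTne : {n | ∃ S : Set V, S.ncard = n ∧ IsSkewForcingSet G S}.Nonempty := by
    refine ⟨(Set.univ : Set V).ncard, Set.univ, rfl, ?_⟩
    exact Set.eq_univ_of_forall fun v => SkewForced.mem (Set.mem_univ v)
  have h0 : (0 : ℕ) ∈ {n | ∃ S : Set V, S.ncard = n ∧ IsSkewForcingSet G S} := by
    rw [← hz]; exact Nat.sInf_mem hTne
  obtain ⟨S, hS0, hSf⟩ := h0
  have hSempty : S = ∅ := (Set.ncard_eq_zero S.toFinite).mp hS0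
  subst hSempty
  have hforce : ∀ v : V, SkewForced G ∅ v := fun v => by
    have := hSf ▸ Set.mem_univ v
    exact this
  have hB : ∀ v : V, ∃ k, v ∈ Bset G k := fun v => forced_mem_Bset (hforce v)
  -- timing function
  set t : V → ℕ := fun v => Nat.find (hB v) with ht
  have htpos : ∀ v, 0 < t v := by
    intro v
    rcases Nat.eq_zero_or_pos (t v) with h | h
    · have hs : v ∈ Bset G (t v) := Nat.find_spec (hB v)
      rw [h] at hs
      exact absurd hs (Set.notMem_empty v)
    · exact h
  have hkey : ∀ v : V, ∃ u, G.Adj u v ∧ ∀ w, G.Adj u w → w ≠ v → w ∈ Bset G (t v - 1) := by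
    intro v
    have hmem : v ∈ Bset G (t v) := Nat.find_spec (hB v)
    have hnot : v ∉ Bset G (t v - 1) := by
      intro hc
      exact Nat.find_min (hB v) (Nat.sub_lt (htpos v) one_pos) hc
    have heq : t v = (t v - 1) + 1 := (Nat.succ_pred_eq_of_pos (htpos v)).symm
    rw [heq] at hmem
    rcases hmem with h | h
    · exact absurd h hnot
    · exact h
  choose σ hσ1 hσ2 using hkey
  have hle : ∀ {w : V} {k : ℕ}, w ∈ Bset G k → t w ≤ k := fun {w k} hw =>
    Nat.find_min' (hB w) hw
  have P2 : ∀ v w, G.Adj (σ v) w → w ≠ v → t w < t v := by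
    intro v w h1 h2
    have h3 := hle (hσ2 v w h1 h2)
    have h4 := htpos v
    omega
  have hinj : Function.Injective σ := by
    intro a b hab
    by_contra hne
    have h1 : t a < t b := P2 b a (hab ▸ hσ1 a) hne
    have h2 : t b < t a := P2 a b (hab ▸ hσ1 b) (Ne.symm hne)
    omega
  have hinv : ∀ v, σ (σ v) = v := by
    have : ∀ n v, t v ≤ n → σ (σ v) = v := by
      intro n
      induction n with
      | zero => intro v hv; exact absurd hv (by have := htpos v; omega)
      | succ n ih =>
        intro v hv
        by_contra hne
        have h1 : t (σ (σ v)) < t v := P2 v (σ (σ v)) (hσ1 (σ v)).symm hne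
        have h2 : σ (σ (σ (σ v))) = σ (σ v) := ih _ (by omega)
        exact hne (hinj (hinj h2))
    exact fun v => this (t v) v le_rfl
  have hadjσ : ∀ v, G.Adj v (σ v) := fun v => (hσ1 v).symm
  -- the matching
  set M : G.Subgraph :=
    { verts := Set.univ
      Adj := fun a b => G.Adj a b ∧ σ a = b
      adj_sub := fun h => h.1
      edge_vert := fun _ => Set.mem_univ _
      symm := by
        constructor
        intro a b h
        exact ⟨h.1.symm, by rw [← h.2, hinv]⟩ } with hM
  have hMpm : M.IsPerfectMatching := by
    constructor
    · intro v _
      refine ⟨σ v, ⟨hadjσ v, rfl⟩, ?_⟩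
      rintro w ⟨_, rfl⟩
      rfl
    · intro v; exact Set.mem_univ v
  have huniq : ∀ M' : G.Subgraph, M'.IsPerfectMatching → M' = M := by
    intro M' hM'
    have hpartner : ∀ v : V, ∃! w, M'.Adj v w := fun v => hM'.1 (hM'.2 v)
    have hall : ∀ n v, t v ≤ n → M'.Adj v (σ v) := by
      intro n
      induction n with
      | zero => intro v hv; exact absurd hv (by have := htpos v; omega)
      | succ n ih =>
        intro v hv
        obtain ⟨w, hw, hwu⟩ := hpartner (σ v)
        rcases eq_or_ne w v with rfl | hne
        · exact hw.symm
        · exfalso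
          have htw : t w < t v := P2 v w (M'.adj_sub hw) hne
          have h1 : M'.Adj w (σ w) := ih w (by omega)
          have h2 : M'.Adj w (σ v) := hw.symm
          -- uniqueness of partner of w
          obtain ⟨x, hx, hxu⟩ := hpartner w
          have e1 : σ w = x := hxu _ h1
          have e2 : σ v = x := hxu _ h2
          exact hne (hinj (e1.trans e2.symm))
    have hall' : ∀ v, M'.Adj v (σ v) := fun v => hall (t v) v le_rfl
    refine Subgraph.ext ?_ ?_
    · rw [hM'.2.verts_eq_univ]
    · ext a b
      constructor
      · intro h
        obtain ⟨w, hw, hwu⟩ := hpartner a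
        have e1 : b = w := hwu _ h
        have e2 : σ a = w := hwu _ (hall' a)
        exact ⟨M'.adj_sub h, e2.trans e1.symm⟩
      · rintro ⟨_, rfl⟩
        exact hall' a
  have hne : Nonempty V := by
    rw [← Fintype.card_pos_iff]; omega
  obtain ⟨v0⟩ := hne
  obtain ⟨v, _, hvmin⟩ := Finset.exists_min_image Finset.univ t ⟨v0, Finset.mem_univ v0⟩
  have hleaf : G.neighborSet (σ v) = {v} := by
    ext w
    simp only [mem_neighborSet, Set.mem_singleton_iff]
    constructor
    · intro hw
      by_contra hne'
      have := P2 v w hw hne'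
      have := hvmin w (Finset.mem_univ w)
      omega
    · intro h
      rw [h]
      exact hσ1 v
  exact ⟨⟨M, hMpm, huniq⟩, hMpm.even_card, σ v, v, hleaf⟩
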